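/- Let Λ be a finite index set and (X_n)_{n∈Λ} an independent family of real-valued random variables on a probability space (Ω, F, ℙ). For S ⊆ Λ write F_S = σ(X_n : n ∈ S). Let g : ℝ^Λ → ℝ be measurable with g(X) integrable, where X = (X_n)_{n∈Λ}. Then for all subsets A, B ⊆ Λ, almost surely E( E( g(X) | F_A ) | F_B ) = E( g(X) | F_{A∩B} ). -/

import Mathlib

open MeasureTheory ProbabilityTheory MeasurableSpace

section Aux

variable {Ω : Type*}

lemma setIntegral_inter_indep {m' m₂ : MeasurableSpace Ω} {m0 : MeasurableSpace Ω}
    {μ : Measure Ω} [IsProbabilityMeasure μ] (hm' : m' ≤ m0) (hm2 : m₂ ≤ m0)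
    (hindp : Indep m' m₂ μ) {h : Ω → ℝ} (hh : StronglyMeasurable[m'] h)
    (hint : Integrable h μ) {s₁ s₂ : Set Ω} (hs₁ : MeasurableSet[m'] s₁)
    (hs₂ : MeasurableSet[m₂] s₂) :
    ∫ x in s₁ ∩ s₂, h x ∂μ = (∫ x in s₁, h x ∂μ) * (μ s₂).toReal := by
  have hF : StronglyMeasurable[m'] (s₁.indicator h) := hh.indicator hs₁
  have hG : Measurable[m₂] (s₂.indicator (1 : Ω → ℝ)) :=
    measurable_const.indicator hs₂
  have hFG : IndepFun (s₁.indicator h) (s₂.indicator (1 : Ω → ℝ)) μ := by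
    rw [IndepFun_iff_Indep]
    exact indep_of_indep_of_le_right (indep_of_indep_of_le_left hindp hF.measurable.comap_le)
      hG.comap_le
  have hFint : Integrable (s₁.indicator h) μ := hint.indicator (hm' _ hs₁)
  have hGint : Integrable (s₂.indicator (1 : Ω → ℝ)) μ :=
    (integrable_const (1 : ℝ)).indicator (hm2 _ hs₂)
  have hmul : ∫ x, (s₁.indicator h * s₂.indicator (1 : Ω → ℝ)) x ∂μ =
      (∫ x, s₁.indicator h x ∂μ) * ∫ x, s₂.indicator (1 : Ω → ℝ) x ∂μ :=
    hFG.integral_mul_eq_mul_integral hFint.1 hGint.1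
  have hprod : (s₁ ∩ s₂).indicator h = s₁.indicator h * s₂.indicator (1 : Ω → ℝ) := by
    funext x
    by_cases h1 : x ∈ s₁ <;> by_cases h2 : x ∈ s₂ <;>
      simp [Set.indicator, h1, h2]
  rw [← integral_indicator ((hm' _ hs₁).inter (hm2 _ hs₂)), hprod, hmul,
    integral_indicator (hm' _ hs₁), integral_indicator_one (hm2 _ hs₂), measureReal_def]

lemma condexp_sup_indep_aux {m₁ m₂ m' : MeasurableSpace Ω} {m0 : MeasurableSpace Ω}
    {μ : Measure Ω} [IsProbabilityMeasure μ]
    (hm1 : m₁ ≤ m') (hm' : m' ≤ m0) (hm2 : m₂ ≤ m0)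
    {f : Ω → ℝ} (hf : StronglyMeasurable[m'] f) (hfint : Integrable f μ)
    (hindp : Indep m' m₂ μ) :
    μ[f | m₁ ⊔ m₂] =ᵐ[μ] μ[f | m₁] := by
  have hm12 : m₁ ⊔ m₂ ≤ m0 := sup_le (hm1.trans hm') hm2
  set P : Set (Set Ω) :=
    {s | ∃ s₁ s₂, MeasurableSet[m₁] s₁ ∧ MeasurableSet[m₂] s₂ ∧ s = s₁ ∩ s₂} with hP
  have hgen : m₁ ⊔ m₂ = generateFrom P := by
    refine le_antisymm (sup_le ?_ ?_) ?_
    · intro s hs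
      exact measurableSet_generateFrom ⟨s, Set.univ, hs, MeasurableSet.univ, (Set.inter_univ s).symm⟩
    · intro s hs
      exact measurableSet_generateFrom ⟨Set.univ, s, MeasurableSet.univ, hs, (Set.univ_inter s).symm⟩
    · refine generateFrom_le ?_
      rintro s ⟨s₁, s₂, hs₁, hs₂, rfl⟩
      exact MeasurableSet.inter ((le_sup_left : m₁ ≤ m₁ ⊔ m₂) _ hs₁)
        ((le_sup_right : m₂ ≤ m₁ ⊔ m₂) _ hs₂)
  have hPpi : IsPiSystem P := by
    rintro s ⟨s₁, s₂, hs₁, hs₂, rfl⟩ t ⟨t₁, t₂, ht₁, ht₂, rfl⟩ _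
    exact ⟨s₁ ∩ t₁, s₂ ∩ t₂, hs₁.inter ht₁, hs₂.inter ht₂, by
      rw [Set.inter_inter_inter_comm]⟩
  have hgint : Integrable (μ[f | m₁]) μ := integrable_condExp
  have hgmeas : StronglyMeasurable[m'] (μ[f | m₁]) := stronglyMeasurable_condExp.mono hm1
  have key : ∀ ⦃s : Set Ω⦄, MeasurableSet[m₁ ⊔ m₂] s →
      ∫ x in s, (μ[f | m₁]) x ∂μ = ∫ x in s, f x ∂μ := by
    refine induction_on_inter (m := m₁ ⊔ m₂) (C := fun s _ => ∫ x in s, (μ[f | m₁]) x ∂μ = ∫ x in s, f x ∂μ)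
      (s := P) hgen hPpi (by simp) ?_ ?_ ?_
    · rintro s ⟨s₁, s₂, hs₁, hs₂, rfl⟩
      rw [setIntegral_inter_indep hm' hm2 hindp hgmeas hgint (hm1 _ hs₁) hs₂,
        setIntegral_inter_indep hm' hm2 hindp hf hfint (hm1 _ hs₁) hs₂,
        setIntegral_condExp (hm1.trans hm') hfint hs₁]
    · intro t ht hC
      have ht0 : MeasurableSet[m0] t := hm12 _ ht
      have h1 := integral_add_compl ht0 hgint
      have h2 := integral_add_compl ht0 hfint
      have h3 : ∫ x, (μ[f | m₁]) x ∂μ = ∫ x, f x ∂μ := integral_condExp (hm1.trans hm')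
      linarith
    · intro u hdisj humeas hC
      have hu0 : ∀ i, MeasurableSet[m0] (u i) := fun i => hm12 _ (humeas i)
      rw [integral_iUnion hu0 hdisj hgint.integrableOn,
        integral_iUnion hu0 hdisj hfint.integrableOn]
      exact tsum_congr hC
  exact (ae_eq_condExp_of_forall_setIntegral_eq hm12 hfint
    (fun s _ _ => hgint.integrableOn) (fun s hs _ => key hs)
    (stronglyMeasurable_condExp.mono (le_sup_left : m₁ ≤ m₁ ⊔ m₂)).aestronglyMeasurable).symm

end Aux

/-- for an independent family `(X_n)_{n ∈ Λ}` and `F_S = σ(X_n : n ∈ S)`,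
iterated conditional expectations compose as
`E(E(g(X) | F_A) | F_B) = E(g(X) | F_{A ∩ B})` a.s. -/
theorem condexp_condexp_indep
    {Ω : Type*} [MeasurableSpace Ω] (Pr : Measure Ω) [IsProbabilityMeasure Pr]
    {Λ : Type*} [Fintype Λ] (X : Λ → Ω → ℝ) (hXmeas : ∀ n, Measurable (X n))
    (hindep : iIndepFun X Pr)
    (g : (Λ → ℝ) → ℝ) (hg : Measurable g)
    (hint : Integrable (fun ω => g (fun n => X n ω)) Pr) (A B : Set Λ) :
    Pr[Pr[(fun ω => g (fun n => X n ω)) |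
        ⨆ n ∈ A, MeasurableSpace.comap (X n) inferInstance] |
        ⨆ n ∈ B, MeasurableSpace.comap (X n) inferInstance] =ᵐ[Pr]
      Pr[(fun ω => g (fun n => X n ω)) |
        ⨆ n ∈ A ∩ B, MeasurableSpace.comap (X n) inferInstance] := by
  set F : Set Λ → MeasurableSpace Ω :=
    fun S => ⨆ n ∈ S, MeasurableSpace.comap (X n) inferInstance with hF
  have hle : ∀ S, F S ≤ ‹MeasurableSpace Ω› := fun S =>
    iSup₂_le fun n _ => (hXmeas n).comap_le
  have hmono : ∀ {S T : Set Λ}, S ⊆ T → F S ≤ F T := fun hST =>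
    biSup_mono hST
  have hBeq : A ∩ B ∪ B \ A = B := by
    rw [Set.inter_comm]; exact Set.inter_union_diff B A
  have hsup : F B = F (A ∩ B) ⊔ F (B \ A) := by
    conv_lhs => rw [← hBeq]
    exact iSup_union
  have hdisj : Disjoint A (B \ A) := disjoint_sdiff_self_right
  have hindepAB : Indep (F A) (F (B \ A)) Pr :=
    indep_iSup_of_disjoint (fun n => (hXmeas n).comap_le) hindep.iIndep hdisj
  have step1 : Pr[Pr[(fun ω => g (fun n => X n ω)) | F A] | F (A ∩ B) ⊔ F (B \ A)] =ᵐ[Pr]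
      Pr[Pr[(fun ω => g (fun n => X n ω)) | F A] | F (A ∩ B)] :=
    condexp_sup_indep_aux (hmono Set.inter_subset_left) (hle A) (hle (B \ A))
      stronglyMeasurable_condExp integrable_condExp hindepAB
  have step2 : Pr[Pr[(fun ω => g (fun n => X n ω)) | F A] | F (A ∩ B)] =ᵐ[Pr]
      Pr[(fun ω => g (fun n => X n ω)) | F (A ∩ B)] :=
    condExp_condExp_of_le (hmono Set.inter_subset_left) (hle A)
  calc Pr[Pr[(fun ω => g (fun n => X n ω)) | F A] | F B]
      = Pr[Pr[(fun ω => g (fun n => X n ω)) | F A] | F (A ∩ B) ⊔ F (B \ A)] := by rw [hsup]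
    _ =ᵐ[Pr] Pr[(fun ω => g (fun n => X n ω)) | F (A ∩ B)] := step1.trans step2
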